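/- Fix an integer p ≥ 3 and let λ = 2cos(π/p). Let α ∈ ℝ with partial quotients (r_j) produced by the λ-continued-fraction algorithm. Then the p−1 initial partial quotients r_0, r_1, …, r_{p−2} are not all equal to 1; that is, the expansion begins with at most p−2 consecutive ones. -/

import Mathlib

open Real Matrix Filter

noncomputable section

/-- `λ_p = 2 cos (π / p)`, the minimal translation length of the Hecke group `G_p`. -/
def heckeLambda (p : ℕ) : ℝ := 2 * Real.cos (Real.pi / p)

/-- The matrix `S = [[1, λ], [0, 1]]`. -/
def Smat (l : ℝ) : Matrix (Fin 2) (Fin 2) ℝ := !![1, l; 0, 1]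

/-- The matrix `T = [[0, -1], [1, 0]]`. -/
def Tmat : Matrix (Fin 2) (Fin 2) ℝ := !![0, -1; 1, 0]

/-- The matrix `U = S * T = [[λ, -1], [1, 0]]`. -/
def Umat (l : ℝ) : Matrix (Fin 2) (Fin 2) ℝ := !![l, -1; 1, 0]

/-- The matrix `S^r = [[1, rλ], [0, 1]]` for an integer exponent `r`. -/
def SmatZ (l : ℝ) (r : ℤ) : Matrix (Fin 2) (Fin 2) ℝ := !![1, (r : ℝ) * l; 0, 1]

/-- Möbius (linear fractional) action of a `2 × 2` real matrix on a real number. -/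
def mobius (M : Matrix (Fin 2) (Fin 2) ℝ) (x : ℝ) : ℝ :=
  (M 0 0 * x + M 0 1) / (M 1 0 * x + M 1 1)

/-- `U^k(0)`, the image of `0` under `k` iterations of the linear fractional
transformation `U : x ↦ λ - 1/x`; as a ratio of entries of the matrix power `U^k`. -/
def Uorbit (l : ℝ) (k : ℕ) : ℝ := ((Umat l) ^ k) 0 1 / ((Umat l) ^ k) 1 1

/-- The complete quotients `α_j` of the (negative) `λ`-continued fraction algorithm:
`α_0 = α`, `α_{j+1} = 1 / (r_j λ - α_j)` with `r_j = ⌊α_j / λ⌋ + 1`. -/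
def cq (l α : ℝ) : ℕ → ℝ
  | 0 => α
  | j + 1 => 1 / (((⌊cq l α j / l⌋ : ℝ) + 1) * l - cq l α j)

/-- The partial quotients `r_j = ⌊α_j / λ⌋ + 1` of the `λ`-continued fraction of `α`. -/
def pq (l α : ℝ) (j : ℕ) : ℤ := ⌊cq l α j / l⌋ + 1

/-- `S` as an element of `SL(2, ℝ)`. -/
def Sgen (l : ℝ) : Matrix.SpecialLinearGroup (Fin 2) ℝ :=
  ⟨!![1, l; 0, 1], by norm_num [Matrix.det_fin_two_of]⟩

/-- `T` as an element of `SL(2, ℝ)`. -/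
def Tgen : Matrix.SpecialLinearGroup (Fin 2) ℝ :=
  ⟨!![0, -1; 1, 0], by norm_num [Matrix.det_fin_two_of]⟩

/-- The Hecke group `G_p`, the subgroup of `SL(2, ℝ)` generated by `S` and `T`. -/
def heckeGroup (l : ℝ) : Subgroup (Matrix.SpecialLinearGroup (Fin 2) ℝ) :=
  Subgroup.closure {Sgen l, Tgen}

/-- `M = [[a, b], [c, d]]` fixes `α` as a linear fractional transformation, i.e.
`α` is a root of `c x² + (d - a) x - b = 0`. -/
def fixesQuad (M : Matrix.SpecialLinearGroup (Fin 2) ℝ) (α : ℝ) : Prop :=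
  M.1 1 0 * α ^ 2 + (M.1 1 1 - M.1 0 0) * α - M.1 0 1 = 0

/-- `α` is a hyperbolic fixed point of the Hecke group `G(λ)`. -/
def IsHypFixedPt (l α : ℝ) : Prop :=
  ∃ M ∈ heckeGroup l, 2 < |M.1 0 0 + M.1 1 1| ∧ fixesQuad M α

/-- `α` is a hyperbolic fixed point of `G(λ)` with Hecke conjugate `α'`
(the other root of the fixed-point quadratic). -/
def IsHypPair (l α α' : ℝ) : Prop :=
  ∃ M ∈ heckeGroup l, 2 < |M.1 0 0 + M.1 1 1| ∧ fixesQuad M α ∧ fixesQuad M α' ∧ α' ≠ α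

/-- A hyperbolic fixed point is `G_p`-reduced when its complete-quotient sequence is
purely periodic. -/
def GpReduced (l β : ℝ) : Prop :=
  IsHypFixedPt l β ∧ ∃ m, 1 ≤ m ∧ cq l β m = β

/-- The map `Φ_p : [0, ∞) → [0, ∞)`: `Φ_p(x) = T U^i (x)` when
`U^{p-i+1}(0) ≤ x < U^{p-i}(0)` for the (unique) `i` with `1 ≤ i ≤ p - 2`,
and `Φ_p(x) = x - λ` when `x ≥ λ`. -/
def Phi (p : ℕ) (l : ℝ) (x : ℝ) : ℝ :=
  @dite ℝ (∃ i : ℕ, 1 ≤ i ∧ i ≤ p - 2 ∧ Uorbit l (p - i + 1) ≤ x ∧ x < Uorbit l (p - i))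
    (Classical.propDecidable _)
    (fun h => mobius (Tmat * (Umat l) ^ h.choose) x)
    (fun _ => x - l)

/-- `C_{n-j, n}`: the partial convergents computed by downward recursion,
`C_{n,n} = r_n λ` and `C_{m,n} = r_m λ - 1 / C_{m+1,n}`. -/
def convAux (l α : ℝ) (n : ℕ) : ℕ → ℝ
  | 0 => (pq l α n : ℝ) * l
  | j + 1 => (pq l α (n - (j + 1)) : ℝ) * l - 1 / convAux l α n j

/-- The `n`-th convergent `C_n = C_{0,n}` of the `λ`-continued fraction of `α`. -/
def conv (l α : ℝ) (n : ℕ) : ℝ := convAux l α n n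

/-- The word `S^{r_0} T S^{r_1} T ⋯ S^{r_n} T`. -/
def cfWord (l : ℝ) (r : ℕ → ℤ) (n : ℕ) : Matrix (Fin 2) (Fin 2) ℝ :=
  ((List.range (n + 1)).map fun j => SmatZ l (r j) * Tmat).prod

/-- the `p - 1` initial partial quotients `r_0, …, r_{p-2}` are not
all equal to `1`. -/
theorem hecke_consecutive_ones_initial (p : ℕ) (hp : 3 ≤ p) (α : ℝ) :
    ¬ ∀ j : ℕ, j ≤ p - 2 → pq (heckeLambda p) α j = 1 := by
  intro h
  set L := heckeLambda p with hLdef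
  set θ := Real.pi / p with hθ
  have hppos : (0 : ℝ) < p := by exact_mod_cast (by omega : 0 < p)
  have hθpos : 0 < θ := div_pos Real.pi_pos hppos
  have hθlt : θ < Real.pi / 2 := by
    rw [hθ]
    exact div_lt_div_of_pos_left Real.pi_pos (by norm_num)
      (by exact_mod_cast (by omega : 2 < p))
  have hcos : 0 < Real.cos θ :=
    Real.cos_pos_of_mem_Ioo ⟨by linarith [Real.pi_pos], hθlt⟩
  have hL2 : L = 2 * Real.cos θ := by rw [hLdef, heckeLambda, hθ]
  have hLpos : 0 < L := by rw [hL2]; linarith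
  have hpθ : (p : ℝ) * θ = Real.pi := by
    rw [hθ]; field_simp
  -- positivity of sin(kθ) for 1 ≤ k ≤ p-1
  have hsin : ∀ k : ℕ, 1 ≤ k → k ≤ p - 1 → 0 < Real.sin (k * θ) := by
    intro k hk1 hk2
    apply Real.sin_pos_of_pos_of_lt_pi
    · exact mul_pos (by exact_mod_cast hk1) hθpos
    · have hk : (k : ℝ) < p := by exact_mod_cast (by omega : k < p)
      nlinarith [hθpos]
  -- bounds from the hypothesis that all partial quotients are 1
  have hbound : ∀ j, j ≤ p - 2 → 0 ≤ cq L α j ∧ cq L α j < L := by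
    intro j hj
    have hpq := h j hj
    have hfl : ⌊cq L α j / L⌋ = 0 := by
      have : ⌊cq L α j / L⌋ + 1 = 1 := hpq
      omega
    rw [Int.floor_eq_zero_iff] at hfl
    obtain ⟨h1, h2⟩ := hfl
    constructor
    · have := (le_div_iff₀ hLpos).mp h1; linarith
    · have := (div_lt_iff₀ hLpos).mp h2; linarith
  have hfl : ∀ j, j ≤ p - 2 → ⌊cq L α j / L⌋ = 0 := by
    intro j hj
    have : ⌊cq L α j / L⌋ + 1 = 1 := h j hj
    omega
  -- the key induction: the orbit of 0 under x ↦ 1/(L-x) is a lower bound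
  have key : ∀ j, j ≤ p - 2 →
      Real.sin (j * θ) / Real.sin ((j + 1) * θ) ≤ cq L α j := by
    intro j
    induction j with
    | zero =>
      intro _
      have : cq L α 0 = α := rfl
      simpa using (hbound 0 (Nat.zero_le _)).1
    | succ j ih =>
      intro hj1
      have hj : j ≤ p - 2 := by omega
      have ihj := ih hj
      obtain ⟨h0j, h1j⟩ := hbound j hj
      have hstep : cq L α (j + 1) = 1 / (L - cq L α j) := by
        have : cq L α (j + 1)
            = 1 / (((⌊cq L α j / L⌋ : ℝ) + 1) * L - cq L α j) := rfl
        rw [this, hfl j hj]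
        norm_num
      have hs1 : 0 < Real.sin (((j : ℝ) + 1) * θ) := by
        have := hsin (j + 1) (by omega) (by omega)
        push_cast at this
        exact this
      have hs2 : 0 < Real.sin (((j : ℝ) + 2) * θ) := by
        have := hsin (j + 2) (by omega) (by omega)
        push_cast at this
        exact this
      have hid : L * Real.sin (((j : ℝ) + 1) * θ) - Real.sin ((j : ℝ) * θ)
          = Real.sin (((j : ℝ) + 2) * θ) := by
        have h1 : ((j : ℝ) + 2) * θ = (((j : ℝ) + 1) * θ) + θ := by ring
        have h2 : ((j : ℝ)) * θ = (((j : ℝ) + 1) * θ) - θ := by ring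
        rw [hL2, h1, h2, Real.sin_add, Real.sin_sub]
        ring
      have hLg : L - Real.sin ((j : ℝ) * θ) / Real.sin (((j : ℝ) + 1) * θ)
          = Real.sin (((j : ℝ) + 2) * θ) / Real.sin (((j : ℝ) + 1) * θ) := by
        rw [eq_div_iff (ne_of_gt hs1), sub_mul, div_mul_cancel₀ _ (ne_of_gt hs1)]
        linarith [hid]
      have hpos : 0 < L - cq L α j := by linarith
      have hle : L - cq L α j
          ≤ L - Real.sin ((j : ℝ) * θ) / Real.sin (((j : ℝ) + 1) * θ) := by
        linarith [ihj]
      have hmono := one_div_le_one_div_of_le hpos hle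
      have heq : 1 / (L - Real.sin ((j : ℝ) * θ) / Real.sin (((j : ℝ) + 1) * θ))
          = Real.sin (((j : ℝ) + 1) * θ) / Real.sin (((j : ℝ) + 2) * θ) := by
        rw [hLg, one_div_div]
      rw [hstep]
      push_cast
      calc Real.sin (((j : ℝ) + 1) * θ) / Real.sin (((j : ℝ) + 1 + 1) * θ)
          = Real.sin (((j : ℝ) + 1) * θ) / Real.sin (((j : ℝ) + 2) * θ) := by
            ring_nf
        _ = 1 / (L - Real.sin ((j : ℝ) * θ) / Real.sin (((j : ℝ) + 1) * θ)) :=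
            heq.symm
        _ ≤ 1 / (L - cq L α j) := hmono
  -- evaluate the bound at j = p - 2, where the orbit value equals L
  have hcast : ((p - 2 : ℕ) : ℝ) = (p : ℝ) - 2 := by
    have : (2 : ℕ) ≤ p := by omega
    push_cast [Nat.cast_sub this]
    ring
  have hkey := key (p - 2) le_rfl
  obtain ⟨_, hlt⟩ := hbound (p - 2) le_rfl
  have hs1 : 0 < Real.sin θ := by
    have := hsin 1 le_rfl (by omega)
    simpa using this
  have hval : Real.sin (((p - 2 : ℕ) : ℝ) * θ) / Real.sin ((((p - 2 : ℕ) : ℝ) + 1) * θ)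
      = L := by
    have e1 : ((p - 2 : ℕ) : ℝ) * θ = Real.pi - 2 * θ := by
      rw [hcast, sub_mul, hpθ]
    have e2 : (((p - 2 : ℕ) : ℝ) + 1) * θ = Real.pi - θ := by
      rw [hcast]
      have : ((p : ℝ) - 2 + 1) * θ = (p : ℝ) * θ - θ := by ring
      rw [this, hpθ]
    rw [e1, e2, Real.sin_pi_sub, Real.sin_pi_sub, Real.sin_two_mul, hL2]
    rw [mul_assoc, mul_comm (Real.sin θ), ← mul_assoc]
    exact mul_div_cancel_right₀ _ (ne_of_gt hs1)
  rw [hval] at hkey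
  linarith
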